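/- Let A, B, C > 0. Suppose u : (0,δ) → ℝ satisfies u(z) = (A/2)z + O(z²) as z → 0⁺, and define v²(z) = (4u(z)³ + 3Au(z)²z + 2u(z)z(A + B) + ACz³)/(4u(z) + Az). Then v²(z) = ((A + B)/3)z + O(z²), and (1 + u(z))² + v²(z) = 1 + Az + ((A + B)/3)z + O(z²) as z → 0⁺. In particular there exists δ₃ > 0 such that (1 + u(z))² + v²(z) > 1 for 0 < z < δ₃. -/

import Mathlib

open Filter Asymptotics

lemma ev_Ioi_of {p : ℝ → Prop} (ε : ℝ) (hε : 0 < ε) (h : ∀ z, 0 < z → z < ε → p z) :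
    ∀ᶠ z in nhdsWithin 0 (Set.Ioi 0), p z := by
  rw [Filter.Eventually, mem_nhdsGT_iff_exists_Ioo_subset]
  exact ⟨ε, hε, fun z hz => h z hz.1 hz.2⟩

lemma ev_Ioi_to {p : ℝ → Prop} (h : ∀ᶠ z in nhdsWithin 0 (Set.Ioi 0), p z) :
    ∃ ε > 0, ∀ z, 0 < z → z < ε → p z := by
  rw [Filter.Eventually, mem_nhdsGT_iff_exists_Ioo_subset] at h
  obtain ⟨ε, hε, hs⟩ := h
  exact ⟨ε, hε, fun z h1 h2 => hs ⟨h1, h2⟩⟩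

lemma aux1 (A B C c u z : ℝ) (hA : 0 < A) (hB : 0 < B) (hC : 0 < C) (hc : 0 ≤ c)
    (hz : 0 < z) (hzc : z ≤ A / (4 * (c + 1)))
    (hw : |u - A / 2 * z| ≤ c * z ^ 2) :
    |(4 * u ^ 3 + 3 * A * u ^ 2 * z + 2 * u * z * (A + B) + A * C * z ^ 3)
        / (4 * u + A * z) - (A + B) / 3 * z|
      ≤ (7 * A ^ 3 + A * C + 2 / 3 * (A + B) * c) / (2 * A) * z ^ 2 := by
  have hcz : c * z ≤ A / 4 := by
    have h4 : z * (4 * (c + 1)) ≤ A := by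
      rw [← le_div_iff₀ (by positivity)]; exact hzc
    nlinarith
  obtain ⟨hw1, hw2⟩ := abs_le.mp hw
  have hul : A / 4 * z ≤ u := by nlinarith
  have huu : u ≤ A * z := by nlinarith
  have hupos : 0 ≤ u := by nlinarith
  have hDpos : 0 < 4 * u + A * z := by nlinarith
  have hD : 2 * A * z ≤ 4 * u + A * z := by nlinarith
  have heq : (4 * u ^ 3 + 3 * A * u ^ 2 * z + 2 * u * z * (A + B) + A * C * z ^ 3)
        / (4 * u + A * z) - (A + B) / 3 * z
      = (4 * u ^ 3 + 3 * A * u ^ 2 * z + A * C * z ^ 3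
          + 2 / 3 * (A + B) * z * (u - A / 2 * z)) / (4 * u + A * z) := by
    field_simp
    ring
  rw [heq, abs_div, abs_of_pos hDpos]
  have hu3 : u ^ 3 ≤ (A * z) ^ 3 := pow_le_pow_left₀ hupos huu 3
  have hu2 : u ^ 2 ≤ (A * z) ^ 2 := pow_le_pow_left₀ hupos huu 2
  have hu3n : 0 ≤ u ^ 3 := by positivity
  have hNm : |4 * u ^ 3 + 3 * A * u ^ 2 * z + A * C * z ^ 3
        + 2 / 3 * (A + B) * z * (u - A / 2 * z)|
      ≤ (7 * A ^ 3 + A * C + 2 / 3 * (A + B) * c) * z ^ 3 := by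
    rw [abs_le]
    constructor <;> nlinarith [mul_le_mul_of_nonneg_left hw1 (by positivity : (0:ℝ) ≤ 2/3*(A+B)*z),
      mul_le_mul_of_nonneg_left hw2 (by positivity : (0:ℝ) ≤ 2/3*(A+B)*z),
      mul_nonneg (mul_nonneg (mul_nonneg hA.le hA.le) hA.le) (pow_nonneg hz.le 3),
      mul_nonneg (mul_nonneg hA.le hC.le) (pow_nonneg hz.le 3),
      mul_nonneg (mul_nonneg hA.le (sq_nonneg u)) hz.le]
  calc |4 * u ^ 3 + 3 * A * u ^ 2 * z + A * C * z ^ 3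
        + 2 / 3 * (A + B) * z * (u - A / 2 * z)| / (4 * u + A * z)
      ≤ ((7 * A ^ 3 + A * C + 2 / 3 * (A + B) * c) * z ^ 3) / (2 * A * z) :=
        div_le_div₀ (by positivity) hNm (by positivity) hD
    _ = (7 * A ^ 3 + A * C + 2 / 3 * (A + B) * c) / (2 * A) * z ^ 2 := by
        field_simp

lemma aux2 (A B C c u z : ℝ) (hA : 0 < A) (hB : 0 < B) (hC : 0 < C) (hc : 0 ≤ c)
    (hz : 0 < z) (hzc : z ≤ A / (4 * (c + 1)))
    (hw : |u - A / 2 * z| ≤ c * z ^ 2) :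
    |(1 + u) ^ 2
        + (4 * u ^ 3 + 3 * A * u ^ 2 * z + 2 * u * z * (A + B) + A * C * z ^ 3)
          / (4 * u + A * z)
        - (1 + A * z + (A + B) / 3 * z)|
      ≤ ((7 * A ^ 3 + A * C + 2 / 3 * (A + B) * c) / (2 * A) + 2 * c + A ^ 2) * z ^ 2 := by
  have h1 := aux1 A B C c u z hA hB hC hc hz hzc hw
  have hcz : c * z ≤ A / 4 := by
    have h4 : z * (4 * (c + 1)) ≤ A := by
      rw [← le_div_iff₀ (by positivity)]; exact hzc
    nlinarith
  obtain ⟨hw1, hw2⟩ := abs_le.mp hw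
  have huu : u ≤ A * z := by nlinarith
  have hupos : 0 ≤ u := by nlinarith
  have hu2 : u ^ 2 ≤ (A * z) ^ 2 := pow_le_pow_left₀ hupos huu 2
  have h2 : |2 * (u - A / 2 * z) + u ^ 2| ≤ (2 * c + A ^ 2) * z ^ 2 := by
    rw [abs_le]; constructor <;> nlinarith [sq_nonneg u, sq_nonneg z]
  have key : (1 + u) ^ 2
        + (4 * u ^ 3 + 3 * A * u ^ 2 * z + 2 * u * z * (A + B) + A * C * z ^ 3)
          / (4 * u + A * z)
        - (1 + A * z + (A + B) / 3 * z)
      = ((4 * u ^ 3 + 3 * A * u ^ 2 * z + 2 * u * z * (A + B) + A * C * z ^ 3)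
          / (4 * u + A * z) - (A + B) / 3 * z) + (2 * (u - A / 2 * z) + u ^ 2) := by
    ring
  rw [key]
  calc _ ≤ _ := abs_add_le _ _
    _ ≤ (7 * A ^ 3 + A * C + 2 / 3 * (A + B) * c) / (2 * A) * z ^ 2
          + (2 * c + A ^ 2) * z ^ 2 := add_le_add h1 h2
    _ = _ := by ring

/-- Asymptotic squared modulus of the first root pair. -/
theorem stmt_14 (A B C δ : ℝ) (hA : 0 < A) (hB : 0 < B) (hC : 0 < C) (hδ : 0 < δ)
    (u : ℝ → ℝ)
    (hu : (fun z => u z - A / 2 * z) =O[nhdsWithin 0 (Set.Ioi 0)] fun z => z ^ 2) :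
    (((fun z => (4 * u z ^ 3 + 3 * A * u z ^ 2 * z + 2 * u z * z * (A + B) + A * C * z ^ 3)
          / (4 * u z + A * z) - (A + B) / 3 * z)
        =O[nhdsWithin 0 (Set.Ioi 0)] fun z => z ^ 2)
      ∧ ((fun z => (1 + u z) ^ 2
            + (4 * u z ^ 3 + 3 * A * u z ^ 2 * z + 2 * u z * z * (A + B) + A * C * z ^ 3)
              / (4 * u z + A * z)
            - (1 + A * z + (A + B) / 3 * z))
          =O[nhdsWithin 0 (Set.Ioi 0)] fun z => z ^ 2)
      ∧ ∃ δ₃ > 0, ∀ z : ℝ, 0 < z → z < δ₃ →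
          1 < (1 + u z) ^ 2
            + (4 * u z ^ 3 + 3 * A * u z ^ 2 * z + 2 * u z * z * (A + B) + A * C * z ^ 3)
              / (4 * u z + A * z)) := by
  rw [isBigO_iff] at hu
  obtain ⟨c₀, hc₀⟩ := hu
  set c : ℝ := max c₀ 0 with hcdef
  have hc : 0 ≤ c := le_max_right _ _
  have hcev : ∀ᶠ z in nhdsWithin 0 (Set.Ioi 0), |u z - A / 2 * z| ≤ c * z ^ 2 := by
    filter_upwards [hc₀] with z hz
    have h2 : ‖u z - A / 2 * z‖ ≤ c * ‖z ^ 2‖ :=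
      hz.trans (mul_le_mul_of_nonneg_right (le_max_left _ _) (norm_nonneg _))
    simpa [Real.norm_eq_abs, abs_of_nonneg (sq_nonneg z)] using h2
  obtain ⟨ε, hε, hεb⟩ := ev_Ioi_to hcev
  set δ₀ : ℝ := min ε (A / (4 * (c + 1))) with hδ₀def
  have hδ₀ : 0 < δ₀ := lt_min hε (by positivity)
  set K : ℝ := (7 * A ^ 3 + A * C + 2 / 3 * (A + B) * c) / (2 * A) with hKdef
  set K₂ : ℝ := K + 2 * c + A ^ 2 with hK₂def
  have hK : 0 ≤ K := by positivity
  have hK₂ : 0 ≤ K₂ := by positivity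
  have hmain : ∀ z, 0 < z → z < δ₀ →
      |(4 * u z ^ 3 + 3 * A * u z ^ 2 * z + 2 * u z * z * (A + B) + A * C * z ^ 3)
          / (4 * u z + A * z) - (A + B) / 3 * z| ≤ K * z ^ 2
      ∧ |(1 + u z) ^ 2
          + (4 * u z ^ 3 + 3 * A * u z ^ 2 * z + 2 * u z * z * (A + B) + A * C * z ^ 3)
            / (4 * u z + A * z)
          - (1 + A * z + (A + B) / 3 * z)| ≤ K₂ * z ^ 2 := by
    intro z hz hzδ
    have hzc : z ≤ A / (4 * (c + 1)) := (hzδ.trans_le (min_le_right _ _)).le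
    have hzε : z < ε := hzδ.trans_le (min_le_left _ _)
    have hw := hεb z hz hzε
    exact ⟨aux1 A B C c (u z) z hA hB hC hc hz hzc hw,
      aux2 A B C c (u z) z hA hB hC hc hz hzc hw⟩
  refine ⟨?_, ?_, ?_⟩
  · rw [isBigO_iff]
    refine ⟨K, ev_Ioi_of δ₀ hδ₀ fun z h1 h2 => ?_⟩
    have := (hmain z h1 h2).1
    simpa [Real.norm_eq_abs, abs_of_nonneg (sq_nonneg z)] using this
  · rw [isBigO_iff]
    refine ⟨K₂, ev_Ioi_of δ₀ hδ₀ fun z h1 h2 => ?_⟩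
    have := (hmain z h1 h2).2
    simpa [Real.norm_eq_abs, abs_of_nonneg (sq_nonneg z)] using this
  · refine ⟨min δ₀ (A / (K₂ + 1)), lt_min hδ₀ (by positivity), fun z hz hzδ => ?_⟩
    have h1 : z < δ₀ := hzδ.trans_le (min_le_left _ _)
    have h2 : z < A / (K₂ + 1) := hzδ.trans_le (min_le_right _ _)
    have h3 : z * (K₂ + 1) < A := (lt_div_iff₀ (by positivity)).mp h2
    have hb := (abs_le.mp (hmain z hz h1).2).1
    nlinarith [sq_nonneg z, mul_pos hz hz]
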